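/- There exists ε₀ > 0 such that for all 0 < ε ≤ ε₀ the following hold: p is continuous on [0,1]; the function 1/p is Lebesgue integrable on [0,1]; p(x) > 0 for all x ∈ (x₀, 1−x₀); p(x) < 0 for all x ∈ [0, x₀) ∪ (1−x₀, 1]; and p(x₀) = p(1−x₀) = 0. -/

import Mathlib

open Real Set Filter Topology MeasureTheory

/-- The degenerate point `x₀ = (2 − √3)ε`. -/
noncomputable def x0 (ε : ℝ) : ℝ := (2 - Real.sqrt 3) * ε

/-- Leading coefficient `φ₂` of `D_ε` on the interval. -/
noncomputable def phi2 (ε x : ℝ) : ℝ :=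
  if x ≤ ε then (1/12) * (1 - 4*(x/ε) + (x/ε)^2)
  else if x ≤ 1 - ε then -(1/6)
  else (1/12) * (1 - 4*((1-x)/ε) + ((1-x)/ε)^2)

/-- First-order coefficient `φ₁` of `D_ε` on the interval. -/
noncomputable def phi1 (ε x : ℝ) : ℝ :=
  if x ≤ ε then -6 * (1 - x/ε) * ((1 + x/ε)^3)⁻¹
  else if x ≤ 1 - ε then 0
  else 6 * (1 - (1-x)/ε) * ((1 + (1-x)/ε)^3)⁻¹

/-- Integration-factor function `g` on `[0, ε]`. -/
noncomputable def gfun (ε x : ℝ) : ℝ :=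
  Real.sign (x - x0 ε) * |x - x0 ε| ^ ((4 + 2*Real.sqrt 3) * ε) *
    |x - 4*ε + x0 ε| ^ ((4 - 2*Real.sqrt 3) * ε) *
    (x + ε) ^ (-(8*ε)) *
    Real.exp (12*ε^3/(ε+x)^2 + 12*ε^2/(ε+x))

/-- Sturm–Liouville principal coefficient `p`. -/
noncomputable def pfun (ε x : ℝ) : ℝ :=
  if x ≤ ε then gfun ε x / (6 * gfun ε ε)
  else if x ≤ 1 - ε then 1/6
  else gfun ε (1-x) / (6 * gfun ε ε)

/-- Sturm–Liouville weight `w = -p/φ₂`. -/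
noncomputable def wfun (ε x : ℝ) : ℝ := -pfun ε x / phi2 ε x

/-! ### Auxiliary definitions and lemmas -/

/-- The positive part of `g` (everything except the sign/vanishing factor). -/
noncomputable def Qfun (ε x : ℝ) : ℝ :=
  |x - 4*ε + x0 ε| ^ ((4 - 2*Real.sqrt 3) * ε) *
    (x + ε) ^ (-(8*ε)) *
    Real.exp (12*ε^3/(ε+x)^2 + 12*ε^2/(ε+x))

lemma sqrt3_lt : Real.sqrt 3 < 2 := by
  nlinarith [Real.sq_sqrt (by norm_num : (3:ℝ) ≥ 0), Real.sqrt_nonneg 3]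

lemma sqrt3_gt : 1 < Real.sqrt 3 := by
  nlinarith [Real.sq_sqrt (by norm_num : (3:ℝ) ≥ 0), Real.sqrt_nonneg 3]

lemma continuous_sign_rpow {a : ℝ} (ha : 0 < a) :
    Continuous fun y : ℝ => Real.sign y * |y| ^ a := by
  have habs : Continuous fun y : ℝ => |y| ^ a :=
    continuous_abs.rpow_const (fun y => Or.inr ha.le)
  have hb : ∀ z : ℝ, ‖Real.sign z * |z| ^ a‖ ≤ |z| ^ a := by
    intro z
    rw [Real.norm_eq_abs, abs_mul, abs_of_nonneg (Real.rpow_nonneg (abs_nonneg z) a)]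
    have h1 : |Real.sign z| ≤ 1 := by
      rcases Real.sign_apply_eq z with h | h | h <;> simp [h]
    nlinarith [Real.rpow_nonneg (abs_nonneg z) a]
  rw [continuous_iff_continuousAt]
  intro y
  rcases lt_trichotomy y 0 with hy | hy | hy
  · have hev : (fun z : ℝ => Real.sign z * |z| ^ a) =ᶠ[𝓝 y] fun z => -1 * |z| ^ a := by
      filter_upwards [eventually_lt_nhds hy] with z hz
      rw [Real.sign_of_neg hz]
    exact ContinuousAt.congr (continuousAt_const.mul habs.continuousAt) hev.symm
  · subst hy
    have htend : Tendsto (fun z : ℝ => |z| ^ a) (𝓝 0) (𝓝 0) := by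
      have := habs.continuousAt (x := 0)
      simpa [ContinuousAt, Real.zero_rpow ha.ne'] using this
    have : Tendsto (fun z : ℝ => Real.sign z * |z| ^ a) (𝓝 0) (𝓝 0) :=
      squeeze_zero_norm hb htend
    simpa [ContinuousAt, Real.sign_zero] using this
  · have hev : (fun z : ℝ => Real.sign z * |z| ^ a) =ᶠ[𝓝 y] fun z => 1 * |z| ^ a := by
      filter_upwards [eventually_gt_nhds hy] with z hz
      rw [Real.sign_of_pos hz]
    exact ContinuousAt.congr (continuousAt_const.mul habs.continuousAt) hev.symm

lemma gfun_eq (ε x : ℝ) : gfun ε x =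
    Real.sign (x - x0 ε) * |x - x0 ε| ^ ((4 + 2*Real.sqrt 3) * ε) * Qfun ε x := by
  unfold gfun Qfun; ring

lemma x0_pos {ε : ℝ} (hε : 0 < ε) : 0 < x0 ε := by
  have := sqrt3_lt; unfold x0; nlinarith

lemma x0_lt {ε : ℝ} (hε : 0 < ε) : x0 ε < ε := by
  have := sqrt3_gt; unfold x0; nlinarith

lemma B_neg {ε x : ℝ} (hε : 0 < ε) (hx : x ≤ ε) : x - 4*ε + x0 ε < 0 := by
  have h := x0_lt hε; have h2 := x0_pos hε; linarith

lemma gfun_pos {ε x : ℝ} (hε : 0 < ε) (h0 : 0 ≤ x) (hx : x0 ε < x) (hx' : x ≤ ε) :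
    0 < gfun ε x := by
  rw [gfun, Real.sign_of_pos (sub_pos.2 hx), one_mul]
  have hA : (0:ℝ) < |x - x0 ε| ^ ((4 + 2*Real.sqrt 3) * ε) :=
    Real.rpow_pos_of_pos (abs_pos.2 (sub_ne_zero.2 hx.ne')) _
  have hB : (0:ℝ) < |x - 4*ε + x0 ε| ^ ((4 - 2*Real.sqrt 3) * ε) :=
    Real.rpow_pos_of_pos (abs_pos.2 (B_neg hε hx').ne) _
  have hD : (0:ℝ) < (x + ε) ^ (-(8*ε)) :=
    Real.rpow_pos_of_pos (by linarith) _
  exact mul_pos (mul_pos (mul_pos hA hB) hD) (Real.exp_pos _)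

lemma gfun_neg {ε x : ℝ} (hε : 0 < ε) (h0 : 0 ≤ x) (hx : x < x0 ε) :
    gfun ε x < 0 := by
  have hxε : x ≤ ε := le_of_lt (lt_trans hx (x0_lt hε))
  rw [gfun, Real.sign_of_neg (sub_neg.2 hx)]
  have hA : (0:ℝ) < |x - x0 ε| ^ ((4 + 2*Real.sqrt 3) * ε) :=
    Real.rpow_pos_of_pos (abs_pos.2 (sub_ne_zero.2 hx.ne)) _
  have hB : (0:ℝ) < |x - 4*ε + x0 ε| ^ ((4 - 2*Real.sqrt 3) * ε) :=
    Real.rpow_pos_of_pos (abs_pos.2 (B_neg hε hxε).ne) _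
  have hD : (0:ℝ) < (x + ε) ^ (-(8*ε)) :=
    Real.rpow_pos_of_pos (by linarith) _
  nlinarith [mul_pos (mul_pos (mul_pos hA hB) hD) (Real.exp_pos (12*ε^3/(ε+x)^2 + 12*ε^2/(ε+x)))]

lemma gfun_zero (ε : ℝ) : gfun ε (x0 ε) = 0 := by
  simp [gfun, sub_self, Real.sign_zero]

lemma Qfun_pos {ε x : ℝ} (hε : 0 < ε) (h0 : 0 ≤ x) (hx : x ≤ ε) : 0 < Qfun ε x := by
  have hB : (0:ℝ) < |x - 4*ε + x0 ε| ^ ((4 - 2*Real.sqrt 3) * ε) :=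
    Real.rpow_pos_of_pos (abs_pos.2 (B_neg hε hx).ne) _
  have hD : (0:ℝ) < (x + ε) ^ (-(8*ε)) :=
    Real.rpow_pos_of_pos (by linarith) _
  exact mul_pos (mul_pos hB hD) (Real.exp_pos _)

lemma gfun_contOn {ε : ℝ} (hε : 0 < ε) {s : Set ℝ} (hs : ∀ x ∈ s, 0 ≤ x) :
    ContinuousOn (gfun ε) s := by
  have ha : (0:ℝ) < (4 + 2*Real.sqrt 3) * ε := by nlinarith [Real.sqrt_nonneg 3]
  have hb : (0:ℝ) ≤ (4 - 2*Real.sqrt 3) * ε := by nlinarith [sqrt3_lt]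
  have h1 : Continuous fun x : ℝ =>
      Real.sign (x - x0 ε) * |x - x0 ε| ^ ((4 + 2*Real.sqrt 3) * ε) :=
    (continuous_sign_rpow ha).comp (continuous_sub_right (x0 ε))
  have h2 : Continuous fun x : ℝ => |x - 4*ε + x0 ε| ^ ((4 - 2*Real.sqrt 3) * ε) := by
    apply Continuous.rpow_const (by fun_prop)
    exact fun x => Or.inr hb
  have hne : ∀ x ∈ s, x + ε ≠ 0 := fun x hx => by have := hs x hx; positivity
  have hne' : ∀ x ∈ s, ε + x ≠ 0 := fun x hx => by have := hs x hx; positivity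
  have h3 : ContinuousOn (fun x : ℝ => (x + ε) ^ (-(8*ε))) s :=
    ContinuousOn.rpow_const (by fun_prop) (fun x hx => Or.inl (hne x hx))
  have h4 : ContinuousOn (fun x : ℝ => Real.exp (12*ε^3/(ε+x)^2 + 12*ε^2/(ε+x))) s := by
    apply Real.continuous_exp.comp_continuousOn
    apply ContinuousOn.add
    · exact ContinuousOn.div continuousOn_const (by fun_prop)
        (fun x hx => pow_ne_zero _ (hne' x hx))
    · exact ContinuousOn.div continuousOn_const (by fun_prop) (hne' ·)
  exact ((h1.continuousOn.mul h2.continuousOn).mul h3).mul h4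

lemma Qfun_contOn {ε : ℝ} (hε : 0 < ε) :
    ContinuousOn (Qfun ε) (Icc 0 ε) := by
  have hb : (0:ℝ) ≤ (4 - 2*Real.sqrt 3) * ε := by nlinarith [sqrt3_lt]
  have h2 : Continuous fun x : ℝ => |x - 4*ε + x0 ε| ^ ((4 - 2*Real.sqrt 3) * ε) := by
    apply Continuous.rpow_const (by fun_prop)
    exact fun x => Or.inr hb
  have hne : ∀ x ∈ Icc (0:ℝ) ε, x + ε ≠ 0 := fun x hx => by have := hx.1; positivity
  have hne' : ∀ x ∈ Icc (0:ℝ) ε, ε + x ≠ 0 := fun x hx => by have := hx.1; positivity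
  have h3 : ContinuousOn (fun x : ℝ => (x + ε) ^ (-(8*ε))) (Icc 0 ε) :=
    ContinuousOn.rpow_const (by fun_prop) (fun x hx => Or.inl (hne x hx))
  have h4 : ContinuousOn (fun x : ℝ => Real.exp (12*ε^3/(ε+x)^2 + 12*ε^2/(ε+x))) (Icc 0 ε) := by
    apply Real.continuous_exp.comp_continuousOn
    apply ContinuousOn.add
    · exact ContinuousOn.div continuousOn_const (by fun_prop)
        (fun x hx => pow_ne_zero _ (hne' x hx))
    · exact ContinuousOn.div continuousOn_const (by fun_prop) (hne' ·)
  exact (h2.continuousOn.mul h3).mul h4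

lemma pfun_contOn {ε : ℝ} (hε : 0 < ε) (hε' : ε ≤ 1/10) (hgε : gfun ε ε ≠ 0) :
    ContinuousOn (pfun ε) (Icc 0 1) := by
  have hcont : ContinuousOn (gfun ε) (Icc 0 1) := gfun_contOn hε (fun x hx => hx.1)
  have hcont' : ContinuousOn (fun x => gfun ε (1-x) / (6 * gfun ε ε)) (Icc 0 1) := by
    apply ContinuousOn.div_const
    apply hcont.comp (by fun_prop)
    intro x hx
    exact ⟨by linarith [hx.2], by linarith [hx.1]⟩
  have hval : gfun ε ε / (6 * gfun ε ε) = 1/6 := by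
    field_simp
  unfold pfun
  apply ContinuousOn.if
  · intro a ha
    have h1 : frontier {a : ℝ | a ≤ ε} = {ε} := frontier_Iic
    rw [h1] at ha
    have ha2 : a = ε := ha.2
    rw [ha2, hval, if_pos (by linarith : ε ≤ 1 - ε)]
  · apply ContinuousOn.div_const
    exact hcont.mono (inter_subset_left)
  · have h2 : closure {a : ℝ | ¬ a ≤ ε} = Ici ε := by
      have : {a : ℝ | ¬ a ≤ ε} = Ioi ε := by ext; simp
      rw [this, closure_Ioi]
    rw [h2]
    apply ContinuousOn.if
    · intro a ha
      have h1 : frontier {a : ℝ | a ≤ 1 - ε} = {1 - ε} := frontier_Iic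
      rw [h1] at ha
      have ha2 : a = 1 - ε := ha.2
      rw [ha2, show (1:ℝ) - (1 - ε) = ε by ring, hval]
    · exact continuousOn_const
    · have h3 : closure {a : ℝ | ¬ a ≤ 1 - ε} = Ici (1 - ε) := by
        have : {a : ℝ | ¬ a ≤ 1 - ε} = Ioi (1-ε) := by ext; simp
        rw [this, closure_Ioi]
      rw [h3]
      exact hcont'.mono (fun x hx => hx.1.1)

lemma ginv_integrable {ε : ℝ} (hε : 0 < ε) (hε' : ε ≤ 1/10) :
    IntegrableOn (fun x => (gfun ε x)⁻¹) (Ioc 0 ε) := by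
  set a : ℝ := (4 + 2*Real.sqrt 3) * ε with ha_def
  have ha : 0 < a := by have := Real.sqrt_nonneg 3; positivity
  have ha1 : -1 < -a := by
    have : a < 1 := by nlinarith [sqrt3_lt]
    linarith
  obtain ⟨C, hC⟩ := isCompact_Icc.exists_bound_of_continuousOn
    ((Qfun_contOn hε).inv₀ (fun x hx => (Qfun_pos hε hx.1 hx.2).ne'))
  have hC0 : 0 ≤ C := le_trans (norm_nonneg _) (hC 0 ⟨le_refl 0, hε.le⟩)
  have hI1 : IntervalIntegrable (fun x : ℝ => |x - x0 ε| ^ (-a)) volume 0 (x0 ε) := by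
    have base : IntervalIntegrable (fun y : ℝ => y ^ (-a)) volume (x0 ε) 0 :=
      (intervalIntegral.intervalIntegrable_rpow' ha1).symm
    have := base.comp_sub_left (x0 ε)
    rw [sub_self, sub_zero] at this
    rw [intervalIntegrable_iff, uIoc_of_le (x0_pos hε).le] at this ⊢
    apply this.congr_fun ?_ measurableSet_Ioc
    intro x hx
    have h : |x - x0 ε| = x0 ε - x := by
      rw [abs_of_nonpos (by linarith [hx.2] : x - x0 ε ≤ 0), neg_sub]
    simp only [h]
  have hI2 : IntervalIntegrable (fun x : ℝ => |x - x0 ε| ^ (-a)) volume (x0 ε) ε := by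
    have base : IntervalIntegrable (fun y : ℝ => y ^ (-a)) volume 0 (ε - x0 ε) :=
      intervalIntegral.intervalIntegrable_rpow' ha1
    have := base.comp_sub_right (x0 ε)
    rw [zero_add, sub_add_cancel] at this
    rw [intervalIntegrable_iff, uIoc_of_le (x0_lt hε).le] at this ⊢
    apply this.congr_fun ?_ measurableSet_Ioc
    intro x hx
    have h : |x - x0 ε| = x - x0 ε := abs_of_nonneg (by linarith [hx.1])
    simp only [h]
  have hdom : IntegrableOn (fun x : ℝ => C * |x - x0 ε| ^ (-a)) (Ioc 0 ε) := by
    have := (hI1.trans hI2).const_mul C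
    rwa [intervalIntegrable_iff, uIoc_of_le hε.le] at this
  have hmeas : AEStronglyMeasurable (fun x => (gfun ε x)⁻¹) (volume.restrict (Ioc 0 ε)) := by
    have hc : ContinuousOn (gfun ε) (Ioc 0 ε) := gfun_contOn hε (fun x hx => hx.1.le)
    exact ((hc.aemeasurable measurableSet_Ioc).inv).aestronglyMeasurable
  apply Integrable.mono hdom hmeas
  rw [ae_restrict_iff' measurableSet_Ioc]
  apply ae_of_all
  intro x hx
  rcases eq_or_ne x (x0 ε) with rfl | hne
  · rw [gfun_eq, sub_self, Real.sign_zero, zero_mul, zero_mul, inv_zero]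
    simp only [norm_zero]
    exact norm_nonneg _
  · have hQ : 0 < Qfun ε x := Qfun_pos hε hx.1.le hx.2
    have habs : |gfun ε x| = |x - x0 ε| ^ a * Qfun ε x := by
      rw [gfun_eq, abs_mul, abs_mul, abs_of_nonneg (Real.rpow_nonneg (abs_nonneg _) _),
        abs_of_pos hQ]
      rcases Real.sign_apply_eq_of_ne_zero (x - x0 ε) (sub_ne_zero.2 hne) with h | h <;>
        rw [h] <;> norm_num <;> exact Or.inl (by rw [ha_def])
    have hr : (0:ℝ) < |x - x0 ε| := abs_pos.2 (sub_ne_zero.2 hne)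
    rw [Real.norm_eq_abs, abs_inv, habs, Real.norm_eq_abs,
      abs_of_nonneg (mul_nonneg hC0 (Real.rpow_nonneg (abs_nonneg _) _)),
      mul_inv, Real.rpow_neg (abs_nonneg _) a]
    rw [mul_comm C]
    apply mul_le_mul_of_nonneg_left _ (inv_nonneg.2 (Real.rpow_nonneg (abs_nonneg _) _))
    calc (Qfun ε x)⁻¹ ≤ ‖(Qfun ε x)⁻¹‖ := le_abs_self _
    _ ≤ C := hC x ⟨hx.1.le, hx.2⟩

lemma pinv_integrable {ε : ℝ} (hε : 0 < ε) (hε' : ε ≤ 1/10) :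
    IntegrableOn (fun x => (pfun ε x)⁻¹) (Icc 0 1) := by
  have hg := ginv_integrable hε hε'
  have hp1 : IntegrableOn (fun x => (pfun ε x)⁻¹) (Ioc 0 ε) := by
    have h1 : IntegrableOn (fun x => 6 * gfun ε ε * (gfun ε x)⁻¹) (Ioc 0 ε) :=
      hg.const_mul (6 * gfun ε ε)
    apply h1.congr_fun ?_ measurableSet_Ioc
    intro x hx
    show 6 * gfun ε ε * (gfun ε x)⁻¹ = (pfun ε x)⁻¹
    unfold pfun
    rw [if_pos hx.2, div_eq_mul_inv, mul_inv, inv_inv, mul_comm]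
  have hp2 : IntegrableOn (fun x => (pfun ε x)⁻¹) (Ioc ε (1-ε)) := by
    have h1 : IntegrableOn (fun _ => (6:ℝ)) (Ioc ε (1-ε)) :=
      integrableOn_const measure_Ioc_lt_top.ne
    apply h1.congr_fun ?_ measurableSet_Ioc
    intro x hx
    show (6:ℝ) = (pfun ε x)⁻¹
    unfold pfun
    rw [if_neg (not_le.2 hx.1), if_pos hx.2]
    norm_num
  have hp3 : IntegrableOn (fun x => (pfun ε x)⁻¹) (Ioc (1-ε) 1) := by
    have hgI : IntervalIntegrable (fun x => (gfun ε x)⁻¹) volume 0 ε := by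
      rw [intervalIntegrable_iff, uIoc_of_le hε.le]; exact hg
    have h2 := (hgI.comp_sub_left 1).symm
    rw [sub_zero] at h2
    have h3 := h2.const_mul (6 * gfun ε ε)
    rw [intervalIntegrable_iff, uIoc_of_le (by linarith : (1:ℝ)-ε ≤ 1)] at h3
    have h4 : IntegrableOn (fun x => 6 * gfun ε ε * (gfun ε (1-x))⁻¹) (Ioc (1-ε) 1) := h3
    apply h4.congr_fun ?_ measurableSet_Ioc
    intro x hx
    show 6 * gfun ε ε * (gfun ε (1-x))⁻¹ = (pfun ε x)⁻¹
    unfold pfun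
    rw [if_neg (not_le.2 (by linarith [hx.1] : ε < x)),
      if_neg (not_le.2 hx.1), div_eq_mul_inv, mul_inv, inv_inv, mul_comm]
  rw [integrableOn_Icc_iff_integrableOn_Ioc]
  have hu : Ioc (0:ℝ) 1 = Ioc 0 ε ∪ Ioc ε (1-ε) ∪ Ioc (1-ε) 1 := by
    rw [Ioc_union_Ioc_eq_Ioc hε.le (by linarith), Ioc_union_Ioc_eq_Ioc (by linarith) (by linarith)]
  rw [hu]
  exact (hp1.union hp2).union hp3

theorem stmt0 :
    ∃ ε₀ > (0:ℝ), ∀ ε : ℝ, 0 < ε → ε ≤ ε₀ →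
      ContinuousOn (pfun ε) (Icc 0 1) ∧
      IntegrableOn (fun x => (pfun ε x)⁻¹) (Icc 0 1) ∧
      (∀ x ∈ Ioo (x0 ε) (1 - x0 ε), 0 < pfun ε x) ∧
      (∀ x ∈ Ico (0:ℝ) (x0 ε) ∪ Ioc (1 - x0 ε) 1, pfun ε x < 0) ∧
      pfun ε (x0 ε) = 0 ∧ pfun ε (1 - x0 ε) = 0 := by
  refine ⟨1/10, by norm_num, fun ε hε hε' => ?_⟩
  have hx0p := x0_pos hε
  have hx0l := x0_lt hε
  have hgε : 0 < gfun ε ε := gfun_pos hε hε.le hx0l le_rfl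
  refine ⟨pfun_contOn hε hε' hgε.ne', pinv_integrable hε hε', ?_, ?_, ?_, ?_⟩
  · intro x hx
    obtain ⟨hx1, hx2⟩ := hx
    by_cases h1 : x ≤ ε
    · unfold pfun
      rw [if_pos h1]
      exact div_pos (gfun_pos hε (by linarith) hx1 h1) (by linarith)
    · by_cases h2 : x ≤ 1 - ε
      · unfold pfun
        rw [if_neg h1, if_pos h2]
        norm_num
      · unfold pfun
        rw [if_neg h1, if_neg h2]
        apply div_pos (gfun_pos hε (by linarith) (by linarith) (by linarith)) (by linarith)
  · intro x hx
    rcases hx with hx | hx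
    · obtain ⟨hx1, hx2⟩ := hx
      unfold pfun
      rw [if_pos (by linarith : x ≤ ε)]
      exact div_neg_of_neg_of_pos (gfun_neg hε hx1 hx2) (by linarith)
    · obtain ⟨hx1, hx2⟩ := hx
      unfold pfun
      rw [if_neg (not_le.2 (by linarith : ε < x)), if_neg (not_le.2 (by linarith : 1 - ε < x))]
      exact div_neg_of_neg_of_pos (gfun_neg hε (by linarith) (by linarith)) (by linarith)
  · unfold pfun
    rw [if_pos hx0l.le, gfun_zero, zero_div]
  · unfold pfun
    rw [if_neg (not_le.2 (by linarith : ε < 1 - x0 ε)),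
      if_neg (not_le.2 (by linarith : 1 - ε < 1 - x0 ε)),
      show (1:ℝ) - (1 - x0 ε) = x0 ε by ring, gfun_zero, zero_div]
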